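/- arXiv:quant-ph/0009090 — 2 statements merged into one kernel-verified Lean document; each statement's English description precedes it below -/
import Mathlib

section
/- Let 2 ≤ N₁ ≤ N₂ and N = N₁N₂, and let T be a separable state on ℂ^{N₁}⊗ℂ^{N₂}. If r > 0 is such that every Hermitian N×N matrix Y with trace 1 and ‖Y − T‖ ≤ r (Frobenius norm) is a separable state, then r ≤ (1/N₁)·√(N/(N−1)). -/
set_option linter.unusedSectionVars false
set_option maxHeartbeats 1000000


open Matrix BigOperators ComplexOrder

noncomputable section

/-- The Frobenius inner product `⟨A, B⟩ = Tr(Aᴴ B)`. -/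
def frobInner {m : Type*} [Fintype m] (A B : Matrix m m ℂ) : ℂ :=
  (Aᴴ * B).trace

/-- The Frobenius norm associated to the Frobenius inner product. -/
def frobNorm {m : Type*} [Fintype m] (A : Matrix m m ℂ) : ℝ :=
  Real.sqrt (frobInner A A).re

/-- A state (density matrix): a positive semidefinite (Hermitian) matrix of trace one. -/
def IsState {m : Type*} [Fintype m] (M : Matrix m m ℂ) : Prop :=
  M.PosSemidef ∧ M.trace = 1

/-- A pure state: a rank-one orthogonal projection, i.e. a Hermitian idempotent of trace one. -/
def IsPureState {m : Type*} [Fintype m] (M : Matrix m m ℂ) : Prop :=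
  M.IsHermitian ∧ M * M = M ∧ M.trace = 1

/-- The Kronecker product of two matrices, on the product basis. -/
def prodMat2 {m₁ m₂ : Type*} (A : Matrix m₁ m₁ ℂ) (B : Matrix m₂ m₂ ℂ) :
    Matrix (m₁ × m₂) (m₁ × m₂) ℂ :=
  fun j k => A j.1 k.1 * B j.2 k.2

/-- A pure product state on a bipartite system. -/
def IsPureProductState2 {m₁ m₂ : Type*} [Fintype m₁] [Fintype m₂]
    (M : Matrix (m₁ × m₂) (m₁ × m₂) ℂ) : Prop :=
  ∃ (A : Matrix m₁ m₁ ℂ) (B : Matrix m₂ m₂ ℂ),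
    IsPureState A ∧ IsPureState B ∧ M = prodMat2 A B

/-- A separable state on a bipartite system: a finite convex combination of
pure product states. -/
def IsSeparable2 {m₁ m₂ : Type*} [Fintype m₁] [Fintype m₂]
    (M : Matrix (m₁ × m₂) (m₁ × m₂) ℂ) : Prop :=
  ∃ (k : ℕ) (c : Fin k → ℝ) (P : Fin k → Matrix (m₁ × m₂) (m₁ × m₂) ℂ),
    (∀ i, 0 ≤ c i) ∧ (∑ i, c i) = 1 ∧ (∀ i, IsPureProductState2 (P i)) ∧
      M = ∑ i, (c i : ℂ) • P i

/-- The maximally entangled pure state on `ℂ^{N₁} ⊗ ℂ^{N₂}` (for `N₁ ≤ N₂`):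
`E = |ψ⟩⟨ψ|` with `ψ = (1/√N₁) ∑ j, e j ⊗ e j`. -/
def maxEnt (N₁ N₂ : ℕ) : Matrix (Fin N₁ × Fin N₂) (Fin N₁ × Fin N₂) ℂ :=
  fun x y =>
    (if (x.1 : ℕ) = (x.2 : ℕ) then (((Real.sqrt N₁ : ℝ) : ℂ))⁻¹ else 0) *
      star (if (y.1 : ℕ) = (y.2 : ℕ) then (((Real.sqrt N₁ : ℝ) : ℂ))⁻¹ else 0)

section Aux
open Matrix

def dIdx {N₁ N₂ : ℕ} (h₁₂ : N₁ ≤ N₂) (j : Fin N₁) : Fin N₁ × Fin N₂ := (j, Fin.castLE h₁₂ j)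

lemma sum_ite_diag {N₁ N₂ : ℕ} (h₁₂ : N₁ ≤ N₂) (f : Fin N₁ × Fin N₂ → ℂ) :
    ∑ x : Fin N₁ × Fin N₂, (if (x.1 : ℕ) = (x.2 : ℕ) then f x else 0)
      = ∑ j : Fin N₁, f (dIdx h₁₂ j) := by
  rw [Fintype.sum_prod_type]
  refine Finset.sum_congr rfl fun j _ => ?_
  rw [Finset.sum_eq_single (Fin.castLE h₁₂ j)]
  · simp [dIdx]
  · intro k _ hk
    rw [if_neg]
    intro h
    exact hk (by ext; exact h.symm)
  · simp

lemma maxEnt_apply_diag {N₁ N₂ : ℕ} (h₁₂ : N₁ ≤ N₂) (j k : Fin N₁) :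
    maxEnt N₁ N₂ (dIdx h₁₂ j) (dIdx h₁₂ k)
      = ((Real.sqrt N₁ : ℂ))⁻¹ * ((Real.sqrt N₁ : ℂ))⁻¹ := by
  simp [maxEnt, dIdx, ← Complex.ofReal_inv]

lemma sqrt_inv_sq {N₁ : ℕ} (h : 0 < N₁) :
    ((Real.sqrt N₁ : ℂ))⁻¹ * ((Real.sqrt N₁ : ℂ))⁻¹ = ((N₁ : ℂ))⁻¹ := by
  have h2 : ((Real.sqrt N₁ : ℝ) : ℂ) * ((Real.sqrt N₁ : ℝ) : ℂ) = ((N₁ : ℕ) : ℂ) := by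
    norm_cast
    exact_mod_cast Real.mul_self_sqrt (by positivity)
  rw [← mul_inv, h2]

lemma star_sqrt_inv {N₁ : ℕ} :
    star (((Real.sqrt N₁ : ℝ) : ℂ))⁻¹ = (((Real.sqrt N₁ : ℝ) : ℂ))⁻¹ := by
  rw [← Complex.ofReal_inv]; exact Complex.conj_ofReal _

lemma trace_maxEnt_mul {N₁ N₂ : ℕ} (h₁₂ : N₁ ≤ N₂) (h : 0 < N₁)
    (M : Matrix (Fin N₁ × Fin N₂) (Fin N₁ × Fin N₂) ℂ) :
    (maxEnt N₁ N₂ * M).trace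
      = ((N₁ : ℂ))⁻¹ * ∑ j : Fin N₁, ∑ k : Fin N₁, M (dIdx h₁₂ k) (dIdx h₁₂ j) := by
  classical
  set c : ℂ := ((Real.sqrt N₁ : ℂ))⁻¹ with hc
  have hstar : star c = c := star_sqrt_inv
  have hcc : c * c = ((N₁ : ℂ))⁻¹ := sqrt_inv_sq h
  have key : (maxEnt N₁ N₂ * M).trace
      = ∑ x : Fin N₁ × Fin N₂, (if (x.1 : ℕ) = (x.2 : ℕ) then
          c * ∑ y : Fin N₁ × Fin N₂, (if (y.1 : ℕ) = (y.2 : ℕ) then c * M y x else 0) else 0) := by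
    rw [Matrix.trace]
    refine Finset.sum_congr rfl fun x _ => ?_
    rw [Matrix.diag_apply, Matrix.mul_apply]
    split_ifs with hx
    · rw [Finset.mul_sum]
      refine Finset.sum_congr rfl fun y _ => ?_
      simp only [maxEnt, hx, if_true]
      split_ifs with hy
      · rw [hstar]; ring
      · simp
    · refine Finset.sum_eq_zero fun y _ => ?_
      simp [maxEnt, hx]
  rw [key, sum_ite_diag h₁₂, Finset.mul_sum]
  refine Finset.sum_congr rfl fun j _ => ?_
  rw [sum_ite_diag h₁₂, Finset.mul_sum, Finset.mul_sum]
  refine Finset.sum_congr rfl fun k _ => ?_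
  rw [← mul_assoc, hcc]

lemma maxEnt_isHermitian {N₁ N₂ : ℕ} : (maxEnt N₁ N₂).IsHermitian := by
  ext x y
  simp only [Matrix.conjTranspose_apply, maxEnt, StarMul.star_mul, star_star]


lemma trace_maxEnt {N₁ N₂ : ℕ} (h₁₂ : N₁ ≤ N₂) (h : 0 < N₁) : (maxEnt N₁ N₂).trace = 1 := by
  have key : (maxEnt N₁ N₂).trace
      = ∑ x : Fin N₁ × Fin N₂, (if (x.1 : ℕ) = (x.2 : ℕ) then ((N₁ : ℂ))⁻¹ else 0) := by
    refine Finset.sum_congr rfl fun x _ => ?_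
    simp only [Matrix.diag_apply, maxEnt]
    split_ifs with hx
    · rw [star_sqrt_inv, sqrt_inv_sq h]
    · simp
  rw [key, sum_ite_diag h₁₂ (fun _ => ((N₁:ℂ))⁻¹), Finset.sum_const, Finset.card_univ,
    Fintype.card_fin, nsmul_eq_mul]
  have hN : (N₁ : ℂ) ≠ 0 := Nat.cast_ne_zero.mpr h.ne'
  field_simp

lemma trace_maxEnt_sq {N₁ N₂ : ℕ} (h₁₂ : N₁ ≤ N₂) (h : 0 < N₁) :
    (maxEnt N₁ N₂ * maxEnt N₁ N₂).trace = 1 := by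
  rw [trace_maxEnt_mul h₁₂ h]
  have heq : ∀ j k : Fin N₁, maxEnt N₁ N₂ (dIdx h₁₂ k) (dIdx h₁₂ j) = ((N₁:ℂ))⁻¹ := fun j k => by
    rw [maxEnt_apply_diag, sqrt_inv_sq h]
  simp only [heq, Finset.sum_const, Finset.card_univ, Fintype.card_fin, nsmul_eq_mul]
  have hN : (N₁ : ℂ) ≠ 0 := Nat.cast_ne_zero.mpr h.ne'
  field_simp

end Aux

section PSD
open Matrix
variable {n : Type*} [Fintype n] [DecidableEq n]

lemma psd_diag_nonneg {M : Matrix n n ℂ} (hM : M.PosSemidef) (i : n) : 0 ≤ M i i := by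
  have := hM.dotProduct_mulVec_nonneg (Pi.single i 1)
  simpa [dotProduct, mulVec, Pi.single_apply, Finset.sum_ite_eq, mul_comm] using this

lemma psd_trace_nonneg {M : Matrix n n ℂ} (hM : M.PosSemidef) : 0 ≤ M.trace :=
  Finset.sum_nonneg fun i _ => psd_diag_nonneg hM i

lemma proj_psd {A : Matrix n n ℂ} (hH : A.IsHermitian) (hI : A * A = A) : A.PosSemidef := by
  have : A = Aᴴ * A := by rw [hH.eq, hI]
  rw [this]; exact Matrix.posSemidef_conjTranspose_mul_self A

lemma trace_proj_mul_nonneg {A C : Matrix n n ℂ} (hH : A.IsHermitian) (hI : A * A = A)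
    (hC : C.PosSemidef) : 0 ≤ (A * C).trace := by
  have h1 : (A * C * Aᴴ).trace = (A * C).trace := by
    rw [Matrix.trace_mul_cycle, hH.eq, hI]
  rw [← h1]
  exact psd_trace_nonneg (hC.mul_mul_conjTranspose_same A)

lemma trace_proj_mul_le {A C : Matrix n n ℂ} (hH : A.IsHermitian) (hI : A * A = A)
    (hC : C.PosSemidef) : (A * C).trace ≤ C.trace := by
  have hH' : (1 - A).IsHermitian := by
    simpa using (Matrix.isHermitian_one (n := n)).sub hH
  have hI' : (1 - A) * (1 - A) = 1 - A := by
    simp [sub_mul, mul_sub, hI]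
  have := trace_proj_mul_nonneg hH' hI' hC
  rw [sub_mul, one_mul, Matrix.trace_sub] at this
  exact sub_nonneg.mp this

end PSD

section Bounds
open Matrix

lemma inv_cast_nonneg (N₁ : ℕ) : (0:ℂ) ≤ ((N₁ : ℂ))⁻¹ := by
  have : ((N₁ : ℂ))⁻¹ = (((N₁ : ℝ)⁻¹ : ℝ) : ℂ) := by push_cast; ring
  rw [this]
  rw [show (0:ℂ) = ((0:ℝ):ℂ) from rfl, Complex.real_le_real]
  positivity

lemma pureProd_bound {N₁ N₂ : ℕ} (h₁₂ : N₁ ≤ N₂) (h : 0 < N₁)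
    {P : Matrix (Fin N₁ × Fin N₂) (Fin N₁ × Fin N₂) ℂ} (hP : IsPureProductState2 P) :
    0 ≤ (maxEnt N₁ N₂ * P).trace ∧ (maxEnt N₁ N₂ * P).trace ≤ ((N₁ : ℂ))⁻¹ := by
  classical
  obtain ⟨A, B, hA, hB, rfl⟩ := hP
  rw [trace_maxEnt_mul h₁₂ h]
  set C : Matrix (Fin N₁) (Fin N₁) ℂ := (Bᵀ).submatrix (Fin.castLE h₁₂) (Fin.castLE h₁₂) with hCdef
  have hS : ∑ j : Fin N₁, ∑ k : Fin N₁, prodMat2 A B (dIdx h₁₂ k) (dIdx h₁₂ j)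
      = (A * C).trace := by
    rw [Finset.sum_comm]
    refine Finset.sum_congr rfl fun k _ => ?_
    rw [Matrix.diag_apply, Matrix.mul_apply]
    refine Finset.sum_congr rfl fun j _ => ?_
    simp [prodMat2, dIdx, hCdef]
  have hBp : B.PosSemidef := proj_psd hB.1 hB.2.1
  have hCp : C.PosSemidef := (hBp.transpose).submatrix _
  have h0 : 0 ≤ (A * C).trace := trace_proj_mul_nonneg hA.1 hA.2.1 hCp
  have h1 : (A * C).trace ≤ C.trace := trace_proj_mul_le hA.1 hA.2.1 hCp
  have h2 : C.trace ≤ 1 := by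
    have hCtr : C.trace = ∑ j : Fin N₁, B (Fin.castLE h₁₂ j) (Fin.castLE h₁₂ j) := by
      simp [Matrix.trace, hCdef, Matrix.diag_apply]
    have hinj : Set.InjOn (Fin.castLE h₁₂) ↑(Finset.univ : Finset (Fin N₁)) := by
      intro a _ b _ hab; exact Fin.castLE_injective h₁₂ hab
    have himg : ∑ j : Fin N₁, B (Fin.castLE h₁₂ j) (Fin.castLE h₁₂ j)
        = ∑ k ∈ Finset.univ.map ⟨Fin.castLE h₁₂, Fin.castLE_injective h₁₂⟩, B k k :=
      (Finset.sum_map Finset.univ ⟨Fin.castLE h₁₂, Fin.castLE_injective h₁₂⟩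
        (fun k => B k k)).symm
    have hle : ∑ k ∈ Finset.univ.map ⟨Fin.castLE h₁₂, Fin.castLE_injective h₁₂⟩, B k k
        ≤ ∑ k : Fin N₂, B k k := by
      refine Finset.sum_le_sum_of_subset_of_nonneg (Finset.subset_univ _) ?_
      intro k _ _
      exact psd_diag_nonneg hBp k
    calc C.trace = _ := hCtr
      _ = _ := himg
      _ ≤ ∑ k : Fin N₂, B k k := hle
      _ = B.trace := rfl
      _ = 1 := hB.2.2
  have hinv := inv_cast_nonneg N₁
  constructor
  · rw [hS]; exact mul_nonneg hinv h0
  · rw [hS]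
    calc ((N₁:ℂ))⁻¹ * (A*C).trace ≤ ((N₁:ℂ))⁻¹ * 1 :=
        mul_le_mul_of_nonneg_left (h1.trans h2) hinv
      _ = ((N₁:ℂ))⁻¹ := mul_one _

lemma prodMat2_trace {m₁ m₂ : Type*} [Fintype m₁] [Fintype m₂]
    (A : Matrix m₁ m₁ ℂ) (B : Matrix m₂ m₂ ℂ) :
    (prodMat2 A B).trace = A.trace * B.trace := by
  rw [Matrix.trace, Matrix.trace, Matrix.trace, Fintype.sum_prod_type, Finset.sum_mul_sum]
  rfl

lemma prodMat2_herm {m₁ m₂ : Type*} [Fintype m₁] [Fintype m₂]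
    {A : Matrix m₁ m₁ ℂ} {B : Matrix m₂ m₂ ℂ} (hA : A.IsHermitian) (hB : B.IsHermitian) :
    (prodMat2 A B).IsHermitian := by
  ext x y
  simp only [Matrix.conjTranspose_apply, prodMat2, StarMul.star_mul]
  rw [mul_comm, ← Matrix.conjTranspose_apply A, ← Matrix.conjTranspose_apply B, hA.eq, hB.eq]

lemma sep_herm {m₁ m₂ : Type*} [Fintype m₁] [Fintype m₂]
    {M : Matrix (m₁ × m₂) (m₁ × m₂) ℂ} (hM : IsSeparable2 M) : M.IsHermitian := by
  obtain ⟨k, c, P, hc, hc1, hP, rfl⟩ := hM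
  have hi : ∀ i, ((c i : ℂ) • P i).IsHermitian := by
    intro i
    obtain ⟨A, B, hA, hB, hPi⟩ := hP i
    show ((c i : ℂ) • P i)ᴴ = (c i : ℂ) • P i
    rw [Matrix.conjTranspose_smul, Complex.star_def, Complex.conj_ofReal, hPi,
      (prodMat2_herm hA.1 hB.1).eq]
  show (∑ i, (c i : ℂ) • P i)ᴴ = ∑ i, (c i : ℂ) • P i
  rw [Matrix.conjTranspose_sum]
  exact Finset.sum_congr rfl fun i _ => hi i

lemma sep_trace {m₁ m₂ : Type*} [Fintype m₁] [Fintype m₂]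
    {M : Matrix (m₁ × m₂) (m₁ × m₂) ℂ} (hM : IsSeparable2 M) : M.trace = 1 := by
  obtain ⟨k, c, P, hc, hc1, hP, rfl⟩ := hM
  rw [Matrix.trace_sum]
  have : ∀ i, ((c i : ℂ) • P i).trace = (c i : ℂ) := by
    intro i
    obtain ⟨A, B, hA, hB, hPi⟩ := hP i
    rw [hPi, Matrix.trace_smul, prodMat2_trace, hA.2.2, hB.2.2, one_mul, smul_eq_mul, mul_one]
  rw [Finset.sum_congr rfl fun i _ => this i]
  exact_mod_cast hc1

lemma sep_bound {N₁ N₂ : ℕ} (h₁₂ : N₁ ≤ N₂) (h : 0 < N₁)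
    {M : Matrix (Fin N₁ × Fin N₂) (Fin N₁ × Fin N₂) ℂ} (hM : IsSeparable2 M) :
    0 ≤ (maxEnt N₁ N₂ * M).trace ∧ (maxEnt N₁ N₂ * M).trace ≤ ((N₁ : ℂ))⁻¹ := by
  obtain ⟨k, c, P, hc, hc1, hP, rfl⟩ := hM
  rw [Matrix.mul_sum, Matrix.trace_sum]
  have heach : ∀ i, (maxEnt N₁ N₂ * ((c i : ℂ) • P i)).trace
      = (c i : ℂ) * (maxEnt N₁ N₂ * P i).trace := by
    intro i
    rw [Matrix.mul_smul, Matrix.trace_smul, smul_eq_mul]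
  rw [Finset.sum_congr rfl fun i _ => heach i]
  have hci : ∀ i, (0:ℂ) ≤ (c i : ℂ) := by
    intro i
    rw [show (0:ℂ) = ((0:ℝ):ℂ) from rfl, Complex.real_le_real]
    exact hc i
  constructor
  · refine Finset.sum_nonneg fun i _ => mul_nonneg (hci i) (pureProd_bound h₁₂ h (hP i)).1
  · calc ∑ i, (c i : ℂ) * (maxEnt N₁ N₂ * P i).trace
        ≤ ∑ i, (c i : ℂ) * ((N₁:ℂ))⁻¹ := by
          refine Finset.sum_le_sum fun i _ => ?_
          exact mul_le_mul_of_nonneg_left (pureProd_bound h₁₂ h (hP i)).2 (hci i)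
      _ = (∑ i, (c i : ℂ)) * ((N₁:ℂ))⁻¹ := by rw [Finset.sum_mul]
      _ = ((N₁:ℂ))⁻¹ := by
          have : (∑ i, (c i : ℂ)) = 1 := by exact_mod_cast hc1
          rw [this, one_mul]

end Bounds

/-- Let `2 ≤ N₁ ≤ N₂`, `N = N₁ N₂`, and let `T` be a separable state on
`ℂ^{N₁} ⊗ ℂ^{N₂}`.  If `r > 0` is such that every Hermitian trace-one matrix `Y` with
`‖Y - T‖ ≤ r` is a separable state, then `r ≤ (1/N₁) ⬝ √(N/(N-1))`. -/
theorem separable_ball_radius_le {N₁ N₂ : ℕ} (h₁ : 2 ≤ N₁) (h₁₂ : N₁ ≤ N₂)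
    (T : Matrix (Fin N₁ × Fin N₂) (Fin N₁ × Fin N₂) ℂ) (hT : IsSeparable2 T)
    (r : ℝ) (hr : 0 < r)
    (hball : ∀ Y : Matrix (Fin N₁ × Fin N₂) (Fin N₁ × Fin N₂) ℂ,
      Y.IsHermitian → Y.trace = 1 → frobNorm (Y - T) ≤ r → IsSeparable2 Y) :
    r ≤ ((N₁ : ℝ))⁻¹ * Real.sqrt (((N₁ * N₂ : ℕ) : ℝ) / (((N₁ * N₂ : ℕ) : ℝ) - 1)) := by
  classical
  have h0 : 0 < N₁ := lt_of_lt_of_le (by norm_num) h₁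
  have hN4 : 4 ≤ N₁ * N₂ := by
    calc 4 = 2 * 2 := by norm_num
    _ ≤ N₁ * N₂ := Nat.mul_le_mul h₁ (h₁.trans h₁₂)
  set nr : ℝ := ((N₁ * N₂ : ℕ) : ℝ) with hnrdef
  have hnr1 : (1:ℝ) < nr := by
    rw [hnrdef]
    exact_mod_cast lt_of_lt_of_le (by norm_num) hN4
  have hnr0 : (0:ℝ) < nr := by linarith
  set s : ℝ := Real.sqrt ((nr - 1)/nr) with hsdef
  have hs0 : (0:ℝ) < s := Real.sqrt_pos.mpr (div_pos (by linarith) hnr0)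
  set c : ℝ := r / s with hcdef
  have hc0 : (0:ℝ) < c := div_pos hr hs0
  set w : ℂ := ((nr⁻¹ : ℝ) : ℂ) with hwdef
  set E : Matrix (Fin N₁ × Fin N₂) (Fin N₁ × Fin N₂) ℂ := maxEnt N₁ N₂ with hEdef
  set Z : Matrix (Fin N₁ × Fin N₂) (Fin N₁ × Fin N₂) ℂ := E - w • 1 with hZdef
  have htr1 : (1 : Matrix (Fin N₁ × Fin N₂) (Fin N₁ × Fin N₂) ℂ).trace = ((N₁ * N₂ : ℕ) : ℂ) := by
    rw [Matrix.trace_one]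
    norm_num
  have hwN : w * ((N₁ * N₂ : ℕ) : ℂ) = 1 := by
    have e1 : ((N₁ * N₂ : ℕ) : ℂ) = ((nr : ℝ) : ℂ) := by rw [hnrdef]; push_cast; ring
    rw [hwdef, e1, ← Complex.ofReal_mul, inv_mul_cancel₀ hnr0.ne', Complex.ofReal_one]
  have htrE : E.trace = 1 := trace_maxEnt h₁₂ h0
  have htrEE : (E * E).trace = 1 := trace_maxEnt_sq h₁₂ h0
  have htrZ : Z.trace = 0 := by
    rw [hZdef, Matrix.trace_sub, Matrix.trace_smul, htr1, htrE, smul_eq_mul, hwN, sub_self]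
  have hEZ : (E * Z).trace = 1 - w := by
    rw [hZdef, Matrix.mul_sub, Matrix.trace_sub, Matrix.mul_smul, Matrix.trace_smul,
      Matrix.mul_one, htrEE, htrE, smul_eq_mul, mul_one]
  have hZH : Zᴴ = Z := by
    rw [hZdef, Matrix.conjTranspose_sub, Matrix.conjTranspose_smul, Matrix.conjTranspose_one,
      maxEnt_isHermitian.eq, hwdef, Complex.star_def, Complex.conj_ofReal]
  have h1w : 1 - w = (((nr - 1)/nr : ℝ) : ℂ) := by
    rw [hwdef]
    push_cast
    field_simp
  have hZZmul : Zᴴ * Z = E * E - w • E - w • E + (w * w) • 1 := by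
    rw [hZH, hZdef]
    simp only [Matrix.sub_mul, Matrix.mul_sub, Matrix.smul_mul, Matrix.mul_smul,
      Matrix.one_mul, Matrix.mul_one, smul_sub, smul_smul]
    abel
  have hZZ : (Zᴴ * Z).trace = (((nr - 1)/nr : ℝ) : ℂ) := by
    rw [hZZmul]
    simp only [Matrix.trace_add, Matrix.trace_sub, Matrix.trace_smul, htrEE, htrE, htr1,
      smul_eq_mul, mul_one]
    rw [mul_assoc, hwN, ← h1w]
    ring
  -- the perturbed state
  set Y : Matrix (Fin N₁ × Fin N₂) (Fin N₁ × Fin N₂) ℂ := T + (c : ℂ) • Z with hYdef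
  have hTh : T.IsHermitian := sep_herm hT
  have hYh : Y.IsHermitian := by
    show Yᴴ = Y
    rw [hYdef, Matrix.conjTranspose_add, Matrix.conjTranspose_smul, Complex.star_def,
      Complex.conj_ofReal, hZH, hTh.eq]
  have hYtr : Y.trace = 1 := by
    rw [hYdef, Matrix.trace_add, sep_trace hT, Matrix.trace_smul, htrZ, smul_zero, add_zero]
  have hYT : frobNorm (Y - T) = r := by
    have hsub : Y - T = (c : ℂ) • Z := by rw [hYdef]; abel
    have hin : frobInner ((c:ℂ) • Z) ((c:ℂ) • Z) = ((c * c * ((nr - 1)/nr) : ℝ) : ℂ) := by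
      show (((c:ℂ) • Z)ᴴ * ((c:ℂ) • Z)).trace = _
      rw [Matrix.conjTranspose_smul, Matrix.smul_mul, Matrix.mul_smul, smul_smul,
        Matrix.trace_smul, smul_eq_mul, hZZ, Complex.star_def, Complex.conj_ofReal]
      push_cast
      ring
    rw [hsub]
    show Real.sqrt (frobInner ((c:ℂ) • Z) ((c:ℂ) • Z)).re = r
    rw [hin, Complex.ofReal_re, show c * c * ((nr-1)/nr) = (c * s)^2 by
      rw [mul_pow, sq, sq, Real.mul_self_sqrt (div_nonneg (by linarith) hnr0.le)]]
    rw [Real.sqrt_sq (by positivity), hcdef, div_mul_cancel₀ _ hs0.ne']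
  have hYsep : IsSeparable2 Y := hball Y hYh hYtr (le_of_eq hYT)
  -- extract the inequality
  have hEY : (E * Y).trace = (E * T).trace + (c : ℂ) * (1 - w) := by
    rw [hYdef, Matrix.mul_add, Matrix.trace_add, Matrix.mul_smul, Matrix.trace_smul,
      smul_eq_mul, hEZ]
  have hup : (E * Y).trace ≤ ((N₁ : ℂ))⁻¹ := (sep_bound h₁₂ h0 hYsep).2
  have hlo : (0:ℂ) ≤ (E * T).trace := (sep_bound h₁₂ h0 hT).1
  have hkey : (c : ℂ) * (1 - w) ≤ ((N₁ : ℂ))⁻¹ := by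
    calc (c : ℂ) * (1 - w) ≤ (E * T).trace + (c : ℂ) * (1 - w) := le_add_of_nonneg_left hlo
      _ = (E * Y).trace := hEY.symm
      _ ≤ ((N₁ : ℂ))⁻¹ := hup
  have hreal : c * ((nr - 1)/nr) ≤ (N₁ : ℝ)⁻¹ := by
    have h2 : (c : ℂ) * (1 - w) = ((c * ((nr - 1)/nr) : ℝ) : ℂ) := by
      rw [h1w]; push_cast; ring
    have h3 : ((N₁ : ℂ))⁻¹ = (((N₁ : ℝ)⁻¹ : ℝ) : ℂ) := by push_cast; ring
    rw [h2, h3] at hkey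
    exact_mod_cast hkey
  have hs2 : s * s = (nr - 1)/nr := Real.mul_self_sqrt (div_nonneg (by linarith) hnr0.le)
  have hcs : c * ((nr - 1)/nr) = r * s := by
    rw [← hs2, hcdef]
    field_simp
  have hrs : r * s ≤ (N₁ : ℝ)⁻¹ := by rw [← hcs]; exact hreal
  have hsinv : Real.sqrt (nr / (nr - 1)) = s⁻¹ := by
    rw [hsdef, ← Real.sqrt_inv, inv_div]
  rw [hsinv]
  calc r = r * s * s⁻¹ := by field_simp
    _ ≤ (N₁ : ℝ)⁻¹ * s⁻¹ := mul_le_mul_of_nonneg_right hrs (inv_nonneg.mpr hs0.le)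
end
end

section
/- Let Q be a fully separable state on ℂ^{n₁}⊗⋯⊗ℂ^{n_p}, and let S ⊆ {1,…,p} be a nonempty proper subset of the particle indices with f = min(Π_{α∈S} n_α, Π_{α∉S} n_α). Then there exists a pure state E on ℂ^N (namely the maximally entangled state across the bipartition determined by S) such that 0 ≤ Tr(QE) ≤ 1/f. -/
open Matrix BigOperators ComplexOrder

noncomputable section

/-- The Kronecker product of the matrices `A α`, realized on the tuple basis of the
tensor product `ℂ^{n 0} ⊗ ⋯ ⊗ ℂ^{n (p-1)} ≃ ℂ^N`, `N = ∏ α, n α`. -/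
def prodMat {p : ℕ} {n : Fin p → ℕ} (A : ∀ α, Matrix (Fin (n α)) (Fin (n α)) ℂ) :
    Matrix (∀ α, Fin (n α)) (∀ α, Fin (n α)) ℂ :=
  fun j k => ∏ α, A α (j α) (k α)

/-- A pure product state: a Kronecker product of pure states on the factors. -/
def IsPureProductState {p : ℕ} {n : Fin p → ℕ}
    (M : Matrix (∀ α, Fin (n α)) (∀ α, Fin (n α)) ℂ) : Prop :=
  ∃ A : ∀ α, Matrix (Fin (n α)) (Fin (n α)) ℂ,
    (∀ α, IsPureState (A α)) ∧ M = prodMat A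

/-- A (fully) separable state: a finite convex combination of pure product states. -/
def IsSeparableState {p : ℕ} {n : Fin p → ℕ}
    (M : Matrix (∀ α, Fin (n α)) (∀ α, Fin (n α)) ℂ) : Prop :=
  ∃ (k : ℕ) (c : Fin k → ℝ) (P : Fin k → Matrix (∀ α, Fin (n α)) (∀ α, Fin (n α)) ℂ),
    (∀ i, 0 ≤ c i) ∧ (∑ i, c i) = 1 ∧ (∀ i, IsPureProductState (P i)) ∧
      M = ∑ i, (c i : ℂ) • P i

/-- The vector `ψ = ∑ j, v j • (e j ⊗ ⋯ ⊗ e j)`, where `e j` is the `j`-th standard basis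
vector of each factor (embedded via `n 0 ≤ n α`). -/
def psiVec {p : ℕ} {n : Fin (p + 2) → ℕ} (hn : Monotone n) (v : Fin (n 0) → ℂ) :
    (∀ α, Fin (n α)) → ℂ :=
  fun x => ∑ j : Fin (n 0), v j *
    ∏ α, (if x α = Fin.castLE (hn (Fin.zero_le α)) j then (1 : ℂ) else 0)

/-- The pure state `E_ψ = |ψ⟩⟨ψ|`. -/
def Epsi {p : ℕ} {n : Fin (p + 2) → ℕ} (hn : Monotone n) (v : Fin (n 0) → ℂ) :
    Matrix (∀ α, Fin (n α)) (∀ α, Fin (n α)) ℂ :=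
  fun x y => psiVec hn v x * star (psiVec hn v y)

/-- A maximally entangled pure state across a bipartite system `m₁ × m₂`:
`|ψ⟩⟨ψ|` with `ψ = (1/√f) ∑_{j < f} u_j ⊗ w_j`, where `f = min (card m₁) (card m₂)` and
`u, w` enumerate orthonormal (standard) bases of the two factors. -/
def maxEntAcross (m₁ m₂ : Type*) [Fintype m₁] [Fintype m₂] :
    Matrix (m₁ × m₂) (m₁ × m₂) ℂ :=
  fun x y =>
    (if ((Fintype.equivFin m₁ x.1 : ℕ) = (Fintype.equivFin m₂ x.2 : ℕ) ∧
          (Fintype.equivFin m₁ x.1 : ℕ) < min (Fintype.card m₁) (Fintype.card m₂)) then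
        (((Real.sqrt (min (Fintype.card m₁) (Fintype.card m₂)) : ℝ) : ℂ))⁻¹ else 0) *
      star (if ((Fintype.equivFin m₁ y.1 : ℕ) = (Fintype.equivFin m₂ y.2 : ℕ) ∧
          (Fintype.equivFin m₁ y.1 : ℕ) < min (Fintype.card m₁) (Fintype.card m₂)) then
        (((Real.sqrt (min (Fintype.card m₁) (Fintype.card m₂)) : ℝ) : ℂ))⁻¹ else 0)

/-- The maximally entangled pure state across the bipartition of
`ℂ^{n₁} ⊗ ⋯ ⊗ ℂ^{n_p}` determined by `S`, viewed on the original (unpermuted) space. -/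
def maxEntBipartition {p : ℕ} (n : Fin p → ℕ) (S : Finset (Fin p)) :
    Matrix (∀ α, Fin (n α)) (∀ α, Fin (n α)) ℂ :=
  Matrix.reindex
    (Equiv.piEquivPiSubtypeProd (· ∈ S) fun α => Fin (n α)).symm
    (Equiv.piEquivPiSubtypeProd (· ∈ S) fun α => Fin (n α)).symm
    (maxEntAcross (∀ i : {x : Fin p // x ∈ S}, Fin (n i))
      (∀ i : {x : Fin p // ¬ x ∈ S}, Fin (n i)))


section Helpers

/-! ### Auxiliary lemmas -/

lemma vec_isPureState {m : Type*} [Fintype m] (v : m → ℂ)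
    (hv : ∑ x, star (v x) * v x = 1) :
    IsPureState (Matrix.of fun x y => v x * star (v y)) := by
  refine ⟨?_, ?_, ?_⟩
  · ext x y
    simp only [IsHermitian, conjTranspose_apply, of_apply]
    rw [StarMul.star_mul, star_star]
  · ext x y
    simp only [Matrix.mul_apply, of_apply]
    calc ∑ z, v x * star (v z) * (v z * star (v y))
        = (∑ z, star (v z) * v z) * (v x * star (v y)) := by
          rw [Finset.sum_mul]; congr 1; ext z; ring
      _ = v x * star (v y) := by rw [hv, one_mul]
  · simp only [Matrix.trace, Matrix.diag, of_apply]
    simpa [mul_comm] using hv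

lemma IsPureState.posSemidef' {m : Type*} [Fintype m] {M : Matrix m m ℂ}
    (h : IsPureState M) : M.PosSemidef := by
  have : M = Mᴴ * M := by rw [h.1.eq, h.2.1]
  rw [this]; exact posSemidef_conjTranspose_mul_self M

lemma trace_mul_vecform {m : Type*} [Fintype m] (Q : Matrix m m ℂ) (v : m → ℂ) :
    (Q * Matrix.of fun x y => v x * star (v y)).trace = star v ⬝ᵥ Q *ᵥ v := by
  simp only [Matrix.trace, Matrix.diag, Matrix.mul_apply, of_apply, dotProduct,
    Matrix.mulVec, Pi.star_apply]
  congr 1; ext x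
  rw [Finset.mul_sum]
  congr 1; ext y
  ring

def prodMatG {ι : Type*} [Fintype ι] {κ : ι → Type*} [∀ i, Fintype (κ i)]
    (A : ∀ i, Matrix (κ i) (κ i) ℂ) : Matrix (∀ i, κ i) (∀ i, κ i) ℂ :=
  fun j k => ∏ i, A i (j i) (k i)

lemma prodMatG_mul {ι : Type*} [Fintype ι] [DecidableEq ι] {κ : ι → Type*} [∀ i, Fintype (κ i)]
    (A B : ∀ i, Matrix (κ i) (κ i) ℂ) :
    prodMatG A * prodMatG B = prodMatG (fun i => A i * B i) := by
  ext x y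
  simp only [Matrix.mul_apply, prodMatG]
  have : ∀ z : ∀ i, κ i, (∏ i, A i (x i) (z i)) * ∏ i, B i (z i) (y i)
      = ∏ i, (A i (x i) (z i) * B i (z i) (y i)) := fun z => (Finset.prod_mul_distrib).symm
  simp_rw [this]
  rw [← Fintype.prod_sum (fun i j => A i (x i) j * B i j (y i))]

lemma prodMatG_trace {ι : Type*} [Fintype ι] [DecidableEq ι] {κ : ι → Type*} [∀ i, Fintype (κ i)]
    (A : ∀ i, Matrix (κ i) (κ i) ℂ) :
    (prodMatG A).trace = ∏ i, (A i).trace := by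
  simp only [Matrix.trace, Matrix.diag, prodMatG]
  rw [Fintype.prod_sum (fun i j => A i j j)]

lemma prodMatG_conjTranspose {ι : Type*} [Fintype ι] {κ : ι → Type*} [∀ i, Fintype (κ i)]
    (A : ∀ i, Matrix (κ i) (κ i) ℂ) :
    (prodMatG A)ᴴ = prodMatG (fun i => (A i)ᴴ) := by
  ext x y
  simp only [conjTranspose_apply, prodMatG, star_prod]

lemma prodMatG_isPureState {ι : Type*} [Fintype ι] [DecidableEq ι] {κ : ι → Type*}
    [∀ i, Fintype (κ i)] {A : ∀ i, Matrix (κ i) (κ i) ℂ} (hA : ∀ i, IsPureState (A i)) :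
    IsPureState (prodMatG A) := by
  refine ⟨?_, ?_, ?_⟩
  · show _ = _
    rw [prodMatG_conjTranspose]
    have : (fun i => (A i)ᴴ) = A := funext fun i => (hA i).1.eq
    rw [this]
  · rw [prodMatG_mul]
    have : (fun i => A i * A i) = A := funext fun i => (hA i).2.1
    rw [this]
  · rw [prodMatG_trace]
    simp [(fun i => (hA i).2.2)]

lemma sum_cond {m₁ m₂ : Type*} [Fintype m₁] [Fintype m₂] {M : Type*} [AddCommMonoid M]
    (hf : 0 < min (Fintype.card m₁) (Fintype.card m₂)) (F : m₁ × m₂ → M) :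
    ∑ x : m₁ × m₂, (if ((Fintype.equivFin m₁ x.1 : ℕ) = (Fintype.equivFin m₂ x.2 : ℕ) ∧
        (Fintype.equivFin m₁ x.1 : ℕ) < min (Fintype.card m₁) (Fintype.card m₂)) then F x else 0)
    = ∑ j : Fin (min (Fintype.card m₁) (Fintype.card m₂)),
        F ((Fintype.equivFin m₁).symm ⟨j, lt_of_lt_of_le j.2 (min_le_left _ _)⟩,
           (Fintype.equivFin m₂).symm ⟨j, lt_of_lt_of_le j.2 (min_le_right _ _)⟩) := by
  classical
  rw [← Finset.sum_filter]
  refine Finset.sum_nbij'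
    (fun x => if h : ((Fintype.equivFin m₁ x.1 : ℕ) = (Fintype.equivFin m₂ x.2 : ℕ) ∧
        (Fintype.equivFin m₁ x.1 : ℕ) < min (Fintype.card m₁) (Fintype.card m₂)) then
        ⟨(Fintype.equivFin m₁ x.1 : ℕ), h.2⟩ else ⟨0, hf⟩)
    (fun j => ((Fintype.equivFin m₁).symm ⟨j, lt_of_lt_of_le j.2 (min_le_left _ _)⟩,
           (Fintype.equivFin m₂).symm ⟨j, lt_of_lt_of_le j.2 (min_le_right _ _)⟩))
    ?_ ?_ ?_ ?_ ?_
  · intro a _; exact Finset.mem_univ _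
  · intro j _
    simp only [Finset.mem_filter, Finset.mem_univ, true_and, Equiv.apply_symm_apply]
    exact j.isLt
  · intro a ha
    simp only [Finset.mem_filter, Finset.mem_univ, true_and] at ha
    simp only [dif_pos ha]
    obtain ⟨a1, a2⟩ := a
    simp only [Prod.mk.injEq]
    constructor
    · rw [Equiv.symm_apply_eq]
    · rw [Equiv.symm_apply_eq]
      exact Fin.ext ha.1
  · intro j _
    simp only
    rw [dif_pos ⟨by simp, by simpa using j.isLt⟩]
    exact Fin.ext (by simp)
  · intro a ha
    simp only [Finset.mem_filter, Finset.mem_univ, true_and] at ha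
    simp only [dif_pos ha]
    obtain ⟨a1, a2⟩ := a
    refine congrArg F ?_
    refine Prod.ext ?_ ?_
    · simp only
      rw [Equiv.eq_symm_apply]
    · simp only
      rw [Equiv.eq_symm_apply]
      exact Fin.ext ha.1.symm

def entVec (m₁ m₂ : Type*) [Fintype m₁] [Fintype m₂] : m₁ × m₂ → ℂ :=
  fun x => if ((Fintype.equivFin m₁ x.1 : ℕ) = (Fintype.equivFin m₂ x.2 : ℕ) ∧
      (Fintype.equivFin m₁ x.1 : ℕ) < min (Fintype.card m₁) (Fintype.card m₂)) then
    (((Real.sqrt (min (Fintype.card m₁) (Fintype.card m₂)) : ℝ) : ℂ))⁻¹ else 0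

lemma star_c_mul_c (r : ℝ) (hr : 0 ≤ r) :
    star (((Real.sqrt r : ℝ)) : ℂ)⁻¹ * (((Real.sqrt r : ℝ)) : ℂ)⁻¹
      = ((r : ℝ) : ℂ)⁻¹ := by
  rw [star_inv₀, Complex.star_def, Complex.conj_ofReal, ← mul_inv, ← Complex.ofReal_mul,
    Real.mul_self_sqrt hr]

lemma entVec_norm {m₁ m₂ : Type*} [Fintype m₁] [Fintype m₂]
    (hf : 0 < min (Fintype.card m₁) (Fintype.card m₂)) :
    ∑ x, star (entVec m₁ m₂ x) * entVec m₁ m₂ x = 1 := by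
  classical
  simp only [entVec, apply_ite (star : ℂ → ℂ), star_zero, ite_zero_mul_ite_zero, and_self]
  rw [sum_cond hf]
  rw [Finset.sum_const, Finset.card_univ, Fintype.card_fin]
  rw [nsmul_eq_mul, star_c_mul_c _ (le_min (Nat.cast_nonneg _) (Nat.cast_nonneg _))]
  have hmin : ((min (Fintype.card m₁) (Fintype.card m₂) : ℕ) : ℂ) =
      ((min ((Fintype.card m₁ : ℝ)) ((Fintype.card m₂ : ℝ)) : ℝ) : ℂ) := by norm_cast
  rw [← hmin, mul_inv_cancel₀]
  exact_mod_cast hf.ne'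

lemma entVec_quadform {m₁ m₂ : Type*} [Fintype m₁] [Fintype m₂]
    (hf : 0 < min (Fintype.card m₁) (Fintype.card m₂))
    (M : Matrix (m₁ × m₂) (m₁ × m₂) ℂ) :
    star (entVec m₁ m₂) ⬝ᵥ M *ᵥ entVec m₁ m₂ =
      ((min (Fintype.card m₁) (Fintype.card m₂) : ℕ) : ℂ)⁻¹ *
      ∑ j : Fin (min (Fintype.card m₁) (Fintype.card m₂)),
      ∑ k : Fin (min (Fintype.card m₁) (Fintype.card m₂)),
        M ((Fintype.equivFin m₁).symm ⟨j, lt_of_lt_of_le j.2 (min_le_left _ _)⟩,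
           (Fintype.equivFin m₂).symm ⟨j, lt_of_lt_of_le j.2 (min_le_right _ _)⟩)
          ((Fintype.equivFin m₁).symm ⟨k, lt_of_lt_of_le k.2 (min_le_left _ _)⟩,
           (Fintype.equivFin m₂).symm ⟨k, lt_of_lt_of_le k.2 (min_le_right _ _)⟩) := by
  classical
  simp only [dotProduct, Matrix.mulVec, Pi.star_apply, entVec, apply_ite (star : ℂ → ℂ),
    star_zero, ite_mul, zero_mul, mul_ite, mul_zero]
  rw [sum_cond hf]
  simp_rw [sum_cond hf]
  have hmin : ((min (Fintype.card m₁) (Fintype.card m₂) : ℕ) : ℂ) =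
      ((min ((Fintype.card m₁ : ℝ)) ((Fintype.card m₂ : ℝ)) : ℝ) : ℂ) := by norm_cast
  rw [hmin, Finset.mul_sum]
  refine Finset.sum_congr rfl fun j _ => ?_
  rw [Finset.mul_sum, Finset.mul_sum]
  refine Finset.sum_congr rfl fun k _ => ?_
  rw [← star_c_mul_c _ (le_min (Nat.cast_nonneg _) (Nat.cast_nonneg _))]
  ring

lemma pure_entry_sq {m : Type*} [Fintype m] {A : Matrix m m ℂ} (hA : IsPureState A) :
    ∑ x : m × m, ‖A x.1 x.2‖ ^ 2 = 1 := by
  have h : (Aᴴ * A).trace = 1 := by rw [hA.1.eq, hA.2.1, hA.2.2]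
  have h2 : (Aᴴ * A).trace = ((∑ x : m × m, ‖A x.1 x.2‖ ^ 2 : ℝ) : ℂ) := by
    simp only [Matrix.trace, Matrix.diag, Matrix.mul_apply, conjTranspose_apply]
    have : ((∑ x : m × m, ‖A x.1 x.2‖ ^ 2 : ℝ) : ℂ) = ∑ x : m, ∑ y : m, ((‖A x y‖ ^ 2 : ℝ) : ℂ) := by
      push_cast
      rw [← Finset.univ_product_univ, Finset.sum_product]
    rw [this, Finset.sum_comm]
    congr 1; ext x
    congr 1; ext y
    simp [Complex.star_def, ← Complex.normSq_eq_conj_mul_self, Complex.normSq_eq_norm_sq]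
  rw [h] at h2
  exact_mod_cast h2.symm

lemma cs_bound {f' : ℕ} {m₁ m₂ : Type*} [Fintype m₁] [Fintype m₂]
    [DecidableEq m₁] [DecidableEq m₂]
    (A : Matrix m₁ m₁ ℂ) (B : Matrix m₂ m₂ ℂ)
    (u : Fin f' → m₁) (w : Fin f' → m₂) (hu : Function.Injective u) (hw : Function.Injective w)
    (hA2 : ∑ x : m₁ × m₁, ‖A x.1 x.2‖ ^ 2 = 1) (hB2 : ∑ x : m₂ × m₂, ‖B x.1 x.2‖ ^ 2 = 1) :
    ‖∑ j : Fin f', ∑ k : Fin f', A (u j) (u k) * B (w j) (w k)‖ ≤ 1 := by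
  have step1 : ‖∑ j : Fin f', ∑ k : Fin f', A (u j) (u k) * B (w j) (w k)‖ ≤
      ∑ z : Fin f' × Fin f', ‖A (u z.1) (u z.2)‖ * ‖B (w z.1) (w z.2)‖ := by
    rw [← Finset.univ_product_univ, Finset.sum_product]
    refine (norm_sum_le _ _).trans ?_
    refine Finset.sum_le_sum fun j _ => ?_
    refine (norm_sum_le _ _).trans ?_
    refine Finset.sum_le_sum fun k _ => ?_
    rw [norm_mul]
  have csq := Finset.sum_mul_sq_le_sq_mul_sq Finset.univ
      (fun z : Fin f' × Fin f' => ‖A (u z.1) (u z.2)‖)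
      (fun z : Fin f' × Fin f' => ‖B (w z.1) (w z.2)‖)
  have hAs : ∑ z : Fin f' × Fin f', ‖A (u z.1) (u z.2)‖ ^ 2 ≤ 1 := by
    rw [← hA2]
    have := Finset.sum_image (f := fun x : m₁ × m₁ => ‖A x.1 x.2‖ ^ 2)
      (g := fun z : Fin f' × Fin f' => (u z.1, u z.2)) (s := Finset.univ)
      (by intro a _ b _ hab
          simp only [Prod.mk.injEq] at hab
          exact Prod.ext (hu hab.1) (hu hab.2))
    rw [← this]
    refine Finset.sum_le_sum_of_subset_of_nonneg (Finset.subset_univ _) ?_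
    intro i _ _; positivity
  have hBs : ∑ z : Fin f' × Fin f', ‖B (w z.1) (w z.2)‖ ^ 2 ≤ 1 := by
    rw [← hB2]
    have := Finset.sum_image (f := fun x : m₂ × m₂ => ‖B x.1 x.2‖ ^ 2)
      (g := fun z : Fin f' × Fin f' => (w z.1, w z.2)) (s := Finset.univ)
      (by intro a _ b _ hab
          simp only [Prod.mk.injEq] at hab
          exact Prod.ext (hw hab.1) (hw hab.2))
    rw [← this]
    refine Finset.sum_le_sum_of_subset_of_nonneg (Finset.subset_univ _) ?_
    intro i _ _; positivity
  have hnn : 0 ≤ ∑ z : Fin f' × Fin f', ‖A (u z.1) (u z.2)‖ * ‖B (w z.1) (w z.2)‖ :=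
    Finset.sum_nonneg fun z _ => mul_nonneg (norm_nonneg _) (norm_nonneg _)
  nlinarith [step1, csq, hAs, hBs, hnn,
    Finset.sum_nonneg (fun z (_ : z ∈ Finset.univ) => sq_nonneg ‖A (u (z : Fin f' × Fin f').1) (u z.2)‖),
    Finset.sum_nonneg (fun z (_ : z ∈ Finset.univ) => sq_nonneg ‖B (w (z : Fin f' × Fin f').1) (w z.2)‖)]

lemma quadform_sum {m : Type*} [Fintype m] {k : ℕ} (c : Fin k → ℝ)
    (P : Fin k → Matrix m m ℂ) (v : m → ℂ) :
    star v ⬝ᵥ (∑ i, (c i : ℂ) • P i) *ᵥ v = ∑ i, (c i : ℂ) * (star v ⬝ᵥ (P i) *ᵥ v) := by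
  have : ∀ s : Finset (Fin k),
      star v ⬝ᵥ (∑ i ∈ s, (c i : ℂ) • P i) *ᵥ v = ∑ i ∈ s, (c i : ℂ) * (star v ⬝ᵥ (P i) *ᵥ v) := by
    intro s
    induction s using Finset.induction with
    | empty => simp
    | insert _ _ hni ih =>
        rw [Finset.sum_insert hni, Finset.sum_insert hni, Matrix.add_mulVec, dotProduct_add, ih,
          Matrix.smul_mulVec, dotProduct_smul, smul_eq_mul]
  exact this Finset.univ

lemma prodMatG_split {p : ℕ} (n : Fin p → ℕ) (S : Finset (Fin p))
    (A : ∀ α, Matrix (Fin (n α)) (Fin (n α)) ℂ)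
    (z w : (∀ i : {x : Fin p // x ∈ S}, Fin (n i)) × (∀ i : {x : Fin p // ¬ x ∈ S}, Fin (n i))) :
    prodMatG A ((Equiv.piEquivPiSubtypeProd (· ∈ S) fun α => Fin (n α)).symm z)
      ((Equiv.piEquivPiSubtypeProd (· ∈ S) fun α => Fin (n α)).symm w) =
    prodMatG (fun i : {x : Fin p // x ∈ S} => A i) z.1 w.1 *
    prodMatG (fun i : {x : Fin p // ¬ x ∈ S} => A i) z.2 w.2 := by
  classical
  simp only [prodMatG]
  rw [← Fintype.prod_subtype_mul_prod_subtype (· ∈ S)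
    (fun α => A α ((Equiv.piEquivPiSubtypeProd (· ∈ S) fun β => Fin (n β)).symm z α)
      ((Equiv.piEquivPiSubtypeProd (· ∈ S) fun β => Fin (n β)).symm w α))]
  congr 1
  · refine Finset.prod_congr (by congr!) fun i _ => ?_
    have h1 : (Equiv.piEquivPiSubtypeProd (· ∈ S) fun β => Fin (n β)).symm z ↑i = z.1 i := by
      simp [Equiv.piEquivPiSubtypeProd, i.2]
    have h2 : (Equiv.piEquivPiSubtypeProd (· ∈ S) fun β => Fin (n β)).symm w ↑i = w.1 i := by
      simp [Equiv.piEquivPiSubtypeProd, i.2]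
    rw [h1, h2]
  · refine Finset.prod_congr (by congr!) fun i _ => ?_
    have h1 : (Equiv.piEquivPiSubtypeProd (· ∈ S) fun β => Fin (n β)).symm z ↑i = z.2 i := by
      simp [Equiv.piEquivPiSubtypeProd, i.2]
    have h2 : (Equiv.piEquivPiSubtypeProd (· ∈ S) fun β => Fin (n β)).symm w ↑i = w.2 i := by
      simp [Equiv.piEquivPiSubtypeProd, i.2]
    rw [h1, h2]

end Helpers

/-- Let `Q` be a fully separable state on `ℂ^{n₁} ⊗ ⋯ ⊗ ℂ^{n_p}`,
let `S` be a nonempty proper subset of the particle indices, and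
`f = min (∏_{α ∈ S} n α) (∏_{α ∉ S} n α)`.  Then there is a pure state `E` on `ℂ^N` —
namely the maximally entangled state across the bipartition determined by `S` — with
`0 ≤ Tr(QE) ≤ 1/f` (in the complex order). -/
theorem fullySeparable_trace_maxEntBipartition {p : ℕ} (hp : 2 ≤ p)
    (n : Fin p → ℕ) (hn : ∀ α, 2 ≤ n α)
    (Q : Matrix (∀ α, Fin (n α)) (∀ α, Fin (n α)) ℂ) (hQ : IsSeparableState Q)
    (S : Finset (Fin p)) (hS : S.Nonempty) (hS' : S ≠ Finset.univ) :
    IsPureState (maxEntBipartition n S) ∧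
      0 ≤ (Q * maxEntBipartition n S).trace ∧
      (Q * maxEntBipartition n S).trace ≤
        (((min (∏ α ∈ S, n α) (∏ α ∈ Sᶜ, n α) : ℕ) : ℂ))⁻¹ := by
  classical
  obtain ⟨k, c, P, hc0, hc1, hPP, hQeq⟩ := hQ
  set e := Equiv.piEquivPiSubtypeProd (· ∈ S) fun α => Fin (n α) with he
  set f' := min (Fintype.card (∀ i : {x : Fin p // x ∈ S}, Fin (n i)))
      (Fintype.card (∀ i : {x : Fin p // ¬ x ∈ S}, Fin (n i))) with hf'
  have hcard1 : Fintype.card (∀ i : {x : Fin p // x ∈ S}, Fin (n i)) = ∏ α ∈ S, n α := by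
    rw [Fintype.card_pi]
    simp only [Fintype.card_fin]
    exact Finset.prod_coe_sort S n
  have hcard2 : Fintype.card (∀ i : {x : Fin p // ¬ x ∈ S}, Fin (n i)) = ∏ α ∈ Sᶜ, n α := by
    rw [Fintype.card_pi]
    simp only [Fintype.card_fin]
    rw [← Finset.prod_coe_sort Sᶜ n]
    exact Fintype.prod_equiv
      (Equiv.subtypeEquivRight (fun x : Fin p => (Finset.mem_compl (s := S) (a := x)).symm))
      (fun i : {x : Fin p // ¬ x ∈ S} => n i) (fun i : {x : Fin p // x ∈ Sᶜ} => n i)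
      (fun i => rfl)
  have hne1 : Nonempty (∀ i : {x : Fin p // x ∈ S}, Fin (n i)) :=
    ⟨fun i => ⟨0, by have := hn i; omega⟩⟩
  have hne2 : Nonempty (∀ i : {x : Fin p // ¬ x ∈ S}, Fin (n i)) :=
    ⟨fun i => ⟨0, by have := hn i; omega⟩⟩
  have hf : 0 < f' := lt_min (@Fintype.card_pos _ _ hne1) (@Fintype.card_pos _ _ hne2)
  have hmineq : min (∏ α ∈ S, n α) (∏ α ∈ Sᶜ, n α) = f' := by rw [hf', hcard1, hcard2]
  set v : (∀ α, Fin (n α)) → ℂ :=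
    fun x => entVec (∀ i : {x : Fin p // x ∈ S}, Fin (n i))
      (∀ i : {x : Fin p // ¬ x ∈ S}, Fin (n i)) (e x) with hvdef
  have hE : maxEntBipartition n S = Matrix.of fun x y => v x * star (v y) := rfl
  have htr : (Q * maxEntBipartition n S).trace = star v ⬝ᵥ Q *ᵥ v := by
    rw [hE]; exact trace_mul_vecform Q v
  have hnorm : ∑ x, star (v x) * v x = 1 := by
    have h1 := Fintype.sum_equiv e (fun x => star (v x) * v x)
      (fun z => star (entVec _ _ z) * entVec _ _ z) (fun x => rfl)
    rw [h1]; exact entVec_norm hf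
  have hPSD : ∀ i, (P i).PosSemidef := by
    intro i; obtain ⟨A, hA, hPA⟩ := hPP i
    rw [hPA]
    exact (prodMatG_isPureState hA).posSemidef'
  have hQPSD : Q.PosSemidef := by
    rw [hQeq]
    refine .of_dotProduct_mulVec_nonneg ?_ ?_
    · show _ = _
      rw [Matrix.conjTranspose_sum]
      refine Finset.sum_congr rfl fun i _ => ?_
      rw [Matrix.conjTranspose_smul, (hPSD i).1.eq]
      congr 1
      exact Complex.conj_ofReal _
    · intro x
      rw [quadform_sum]
      refine Finset.sum_nonneg fun i _ => ?_
      have h1 : (0 : ℂ) ≤ (c i : ℂ) := by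
        rw [Complex.le_def]
        simpa using hc0 i
      exact mul_nonneg h1 ((hPSD i).dotProduct_mulVec_nonneg x)
  -- the per-term bound
  have hsb : ∀ i, ((star v ⬝ᵥ (P i) *ᵥ v).re ≤ ((f' : ℕ) : ℝ)⁻¹ ∧
      (star v ⬝ᵥ (P i) *ᵥ v).im = 0) := by
    intro i
    have h0 : (0 : ℂ) ≤ star v ⬝ᵥ (P i) *ᵥ v := (hPSD i).dotProduct_mulVec_nonneg v
    obtain ⟨A, hA, hPA⟩ := hPP i
    have hswap : star v ⬝ᵥ (P i) *ᵥ v =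
        star (entVec _ _) ⬝ᵥ ((P i).submatrix ⇑e.symm ⇑e.symm) *ᵥ (entVec _ _) := by
      show (∑ x, star (v x) * (P i *ᵥ v) x) = ∑ z, star (entVec _ _ z) *
        (((P i).submatrix ⇑e.symm ⇑e.symm) *ᵥ entVec _ _) z
      refine Fintype.sum_equiv e _ _ fun x => ?_
      congr 1
      show (∑ y, P i x y * v y) =
        ∑ z, ((P i).submatrix ⇑e.symm ⇑e.symm) (e x) z * entVec _ _ z
      refine Fintype.sum_equiv e _ _ fun y => ?_
      simp [Matrix.submatrix_apply, hvdef]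
    rw [hswap, entVec_quadform hf]
    set T := ∑ j : Fin f', ∑ k : Fin f',
        ((P i).submatrix ⇑e.symm ⇑e.symm)
          ((Fintype.equivFin _).symm ⟨j, lt_of_lt_of_le j.2 (min_le_left _ _)⟩,
           (Fintype.equivFin _).symm ⟨j, lt_of_lt_of_le j.2 (min_le_right _ _)⟩)
          ((Fintype.equivFin _).symm ⟨k, lt_of_lt_of_le k.2 (min_le_left _ _)⟩,
           (Fintype.equivFin _).symm ⟨k, lt_of_lt_of_le k.2 (min_le_right _ _)⟩) with hT
    have hu : Function.Injective (fun j : Fin f' =>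
        (Fintype.equivFin (∀ i : {x : Fin p // x ∈ S}, Fin (n i))).symm
          ⟨(j : ℕ), lt_of_lt_of_le j.2 (min_le_left _ _)⟩) := by
      intro a b hab
      have h2 := congrArg (⇑(Fintype.equivFin (∀ i : {x : Fin p // x ∈ S}, Fin (n i)))) hab
      simp only [Equiv.apply_symm_apply] at h2
      exact Fin.ext (Fin.mk_eq_mk.mp h2)
    have hw : Function.Injective (fun j : Fin f' =>
        (Fintype.equivFin (∀ i : {x : Fin p // ¬ x ∈ S}, Fin (n i))).symm
          ⟨(j : ℕ), lt_of_lt_of_le j.2 (min_le_right _ _)⟩) := by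
      intro a b hab
      have h2 := congrArg (⇑(Fintype.equivFin (∀ i : {x : Fin p // ¬ x ∈ S}, Fin (n i)))) hab
      simp only [Equiv.apply_symm_apply] at h2
      exact Fin.ext (Fin.mk_eq_mk.mp h2)
    have hTb : ‖T‖ ≤ 1 := by
      rw [hT]
      have hterm : ∀ j k : Fin f',
          ((P i).submatrix ⇑e.symm ⇑e.symm)
            ((Fintype.equivFin _).symm ⟨j, lt_of_lt_of_le j.2 (min_le_left _ _)⟩,
             (Fintype.equivFin _).symm ⟨j, lt_of_lt_of_le j.2 (min_le_right _ _)⟩)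
            ((Fintype.equivFin _).symm ⟨k, lt_of_lt_of_le k.2 (min_le_left _ _)⟩,
             (Fintype.equivFin _).symm ⟨k, lt_of_lt_of_le k.2 (min_le_right _ _)⟩)
          = prodMatG (fun i : {x : Fin p // x ∈ S} => A i)
              ((Fintype.equivFin _).symm ⟨j, lt_of_lt_of_le j.2 (min_le_left _ _)⟩)
              ((Fintype.equivFin _).symm ⟨k, lt_of_lt_of_le k.2 (min_le_left _ _)⟩) *
            prodMatG (fun i : {x : Fin p // ¬ x ∈ S} => A i)
              ((Fintype.equivFin _).symm ⟨j, lt_of_lt_of_le j.2 (min_le_right _ _)⟩)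
              ((Fintype.equivFin _).symm ⟨k, lt_of_lt_of_le k.2 (min_le_right _ _)⟩) := by
        intro j k
        rw [Matrix.submatrix_apply, hPA]
        exact prodMatG_split n S A _ _
      simp_rw [hterm]
      exact cs_bound _ _ _ _ hu hw
        (pure_entry_sq (prodMatG_isPureState (fun i => hA i)))
        (pure_entry_sq (prodMatG_isPureState (fun i => hA i)))
    have hnormle : ‖(((f' : ℕ)) : ℂ)⁻¹ * T‖ ≤ ((f' : ℕ) : ℝ)⁻¹ := by
      rw [norm_mul, norm_inv]
      have : ‖((f' : ℕ) : ℂ)‖ = ((f' : ℕ) : ℝ) := by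
        simp
      rw [this]
      calc ((f' : ℕ) : ℝ)⁻¹ * ‖T‖ ≤ ((f' : ℕ) : ℝ)⁻¹ * 1 := by
            gcongr
        _ = ((f' : ℕ) : ℝ)⁻¹ := mul_one _
    constructor
    · refine le_trans ?_ hnormle
      exact Complex.re_le_norm _
    · rw [hswap, entVec_quadform hf] at h0
      exact ((Complex.le_def.mp h0).2).symm
  -- assemble
  refine ⟨?_, ?_, ?_⟩
  · rw [hE]; exact vec_isPureState v hnorm
  · rw [htr]; exact hQPSD.dotProduct_mulVec_nonneg v
  · rw [htr, hQeq, quadform_sum, hmineq]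
    rw [Complex.le_def]
    constructor
    · rw [Complex.re_sum]
      have hR : (((f' : ℕ) : ℂ)⁻¹).re = ((f' : ℕ) : ℝ)⁻¹ := by
        rw [show ((f' : ℕ) : ℂ) = (((f' : ℕ) : ℝ) : ℂ) by push_cast; ring,
          ← Complex.ofReal_inv, Complex.ofReal_re]
      rw [hR]
      have hterm : ∀ i, ((c i : ℂ) * (star v ⬝ᵥ (P i) *ᵥ v)).re
          = c i * (star v ⬝ᵥ (P i) *ᵥ v).re := by
        intro i
        rw [Complex.mul_re, Complex.ofReal_re, Complex.ofReal_im, zero_mul, sub_zero]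
      simp_rw [hterm]
      calc ∑ i, c i * (star v ⬝ᵥ (P i) *ᵥ v).re
          ≤ ∑ i, c i * ((f' : ℕ) : ℝ)⁻¹ :=
            Finset.sum_le_sum fun i _ =>
              mul_le_mul_of_nonneg_left (hsb i).1 (hc0 i)
        _ = ((f' : ℕ) : ℝ)⁻¹ := by rw [← Finset.sum_mul, hc1, one_mul]
    · rw [Complex.im_sum]
      have hI : (((f' : ℕ) : ℂ)⁻¹).im = 0 := by
        rw [show ((f' : ℕ) : ℂ) = (((f' : ℕ) : ℝ) : ℂ) by push_cast; ring,
          ← Complex.ofReal_inv, Complex.ofReal_im]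
      rw [hI]
      refine Finset.sum_eq_zero fun i _ => ?_
      rw [Complex.mul_im, Complex.ofReal_im, Complex.ofReal_re, zero_mul, add_zero, (hsb i).2,
        mul_zero]
end
end
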